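/- Let a < b and let R, s : [a, b] → ℝ be Lipschitz functions with R(b) = s(b), such that for almost every t ∈ (a, b), if s(t) < R(t) then R'(t) ≥ s'(t). Then R(t) ≤ s(t) for all t ∈ [a, b]. -/

import Mathlib

open MeasureTheory Set

/-- For a continuous monotone function, the integral of the derivative is at most the
increment of the function. -/
lemma mono_integral_deriv_le {f : ℝ → ℝ} (hf : Monotone f) (hc : Continuous f)
    {x y : ℝ} (hxy : x ≤ y) :
    ∫ t in Ioc x y, deriv f t ≤ f y - f x := by
  set μ := hf.stieltjesFunction.measure with hμdef
  have hrl : ∀ z : ℝ, Function.rightLim f z = f z := fun z =>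
    hf.continuousWithinAt_Ioi_iff_rightLim_eq.1 (hc.continuousAt.continuousWithinAt)
  have hae : ∀ᵐ t ∂(volume : Measure ℝ), deriv f t = (μ.rnDeriv volume t).toReal := by
    filter_upwards [hf.ae_hasDerivAt] with t ht using ht.deriv
  have h1 : ∫ t in Ioc x y, deriv f t
      = ∫ t in Ioc x y, (μ.rnDeriv volume t).toReal :=
    integral_congr_ae (ae_restrict_of_ae hae)
  have h2 : ∫ t in Ioc x y, (μ.rnDeriv volume t).toReal
      = (∫⁻ t in Ioc x y, μ.rnDeriv volume t).toReal := by
    apply integral_toReal ((Measure.measurable_rnDeriv μ volume).aemeasurable)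
    exact ae_restrict_of_ae (Measure.rnDeriv_lt_top μ volume)
  have h3 : (∫⁻ t in Ioc x y, μ.rnDeriv volume t) ≤ μ (Ioc x y) := by
    have := Measure.withDensity_rnDeriv_le μ volume
    calc (∫⁻ t in Ioc x y, μ.rnDeriv volume t)
        = (volume.withDensity (μ.rnDeriv volume)) (Ioc x y) :=
          (withDensity_apply _ measurableSet_Ioc).symm
      _ ≤ μ (Ioc x y) := this _
  have h4 : μ (Ioc x y) = ENNReal.ofReal (f y - f x) := by
    rw [hμdef, StieltjesFunction.measure_Ioc, Monotone.stieltjesFunction_eq,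
      Monotone.stieltjesFunction_eq, hrl, hrl]
  rw [h1, h2]
  calc (∫⁻ t in Ioc x y, μ.rnDeriv volume t).toReal
      ≤ (μ (Ioc x y)).toReal := by
        apply ENNReal.toReal_mono _ h3
        rw [h4]; exact ENNReal.ofReal_ne_top
    _ = f y - f x := by rw [h4, ENNReal.toReal_ofReal (sub_nonneg.2 (hf hxy))]

/-- Fundamental theorem of calculus for Lipschitz functions on ℝ. -/
lemma lipschitz_ftc {f : ℝ → ℝ} {K : NNReal} (hf : LipschitzWith K f)
    {x y : ℝ} (hxy : x ≤ y) :
    f y - f x = ∫ t in Ioc x y, deriv f t := by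
  have hdist : ∀ u v : ℝ, |f u - f v| ≤ K * |u - v| := by
    intro u v
    have := hf.dist_le_mul u v
    simpa [Real.dist_eq] using this
  set g₁ : ℝ → ℝ := fun t => f t + K * t with hg₁def
  set g₂ : ℝ → ℝ := fun t => K * t - f t with hg₂def
  have hm1 : Monotone g₁ := by
    intro u v huv
    have habs : |u - v| = v - u := by rw [abs_sub_comm]; exact abs_of_nonneg (by linarith)
    have h := abs_le.1 (hdist u v)
    rw [habs] at h
    simp only [hg₁def]
    linarith [h.2]
  have hm2 : Monotone g₂ := by
    intro u v huv
    have habs : |u - v| = v - u := by rw [abs_sub_comm]; exact abs_of_nonneg (by linarith)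
    have h := abs_le.1 (hdist u v)
    rw [habs] at h
    simp only [hg₂def]
    linarith [h.1]
  have hc : Continuous f := hf.continuous
  have hc1 : Continuous g₁ := hc.add (continuous_const.mul continuous_id)
  have hc2 : Continuous g₂ := (continuous_const.mul continuous_id).sub hc
  -- derivative bound and integrability
  have hbd : ∀ t, ‖deriv f t‖ ≤ (K : ℝ) := fun t => norm_deriv_le_of_lipschitz hf
  have hmeas : Measurable (deriv f) := measurable_deriv f
  have hint : IntegrableOn (deriv f) (Ioc x y) (volume : Measure ℝ) := by
    apply Integrable.mono' (integrableOn_const measure_Ioc_lt_top.ne :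
      IntegrableOn (fun _ : ℝ => (K : ℝ)) (Ioc x y) (volume : Measure ℝ))
      hmeas.aestronglyMeasurable
    exact ae_of_all _ hbd
  have hintK : IntegrableOn (fun _ : ℝ => (K : ℝ)) (Ioc x y) (volume : Measure ℝ) :=
    integrableOn_const measure_Ioc_lt_top.ne
  have hdiff : ∀ᵐ t ∂(volume : Measure ℝ), DifferentiableAt ℝ f t :=
    hf.ae_differentiableAt
  have hd1 : ∀ᵐ t ∂(volume : Measure ℝ), deriv g₁ t = deriv f t + K := by
    filter_upwards [hdiff] with t ht
    have h2 : HasDerivAt (fun s : ℝ => (K : ℝ) * s) (K : ℝ) t := by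
      simpa using (hasDerivAt_id t).const_mul (K : ℝ)
    exact (ht.hasDerivAt.add h2).deriv
  have hd2 : ∀ᵐ t ∂(volume : Measure ℝ), deriv g₂ t = K - deriv f t := by
    filter_upwards [hdiff] with t ht
    have h2 : HasDerivAt (fun s : ℝ => (K : ℝ) * s) (K : ℝ) t := by
      simpa using (hasDerivAt_id t).const_mul (K : ℝ)
    exact (h2.sub ht.hasDerivAt).deriv
  have hvol : ((volume : Measure ℝ) (Ioc x y)).toReal = y - x := by
    rw [Real.volume_Ioc, ENNReal.toReal_ofReal (by linarith)]
  have e1 : ∫ t in Ioc x y, deriv g₁ t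
      = (∫ t in Ioc x y, deriv f t) + K * (y - x) := by
    rw [integral_congr_ae (ae_restrict_of_ae hd1), integral_add hint hintK]
    congr 1
    rw [setIntegral_const, measureReal_def, hvol, smul_eq_mul, mul_comm]
  have e2 : ∫ t in Ioc x y, deriv g₂ t
      = K * (y - x) - ∫ t in Ioc x y, deriv f t := by
    rw [integral_congr_ae (ae_restrict_of_ae hd2), integral_sub hintK hint]
    congr 1
    rw [setIntegral_const, measureReal_def, hvol, smul_eq_mul, mul_comm]
  have L1 := mono_integral_deriv_le hm1 hc1 hxy
  have L2 := mono_integral_deriv_le hm2 hc2 hxy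
  rw [e1] at L1
  rw [e2] at L2
  simp only [hg₁def, hg₂def] at L1 L2
  have := L1
  linarith

/-- comparison principle for Lipschitz curves: if `R(b) = s(b)` and
a.e. on `(a,b)`, whenever `s(t) < R(t)` one has `R'(t) ≥ s'(t)`, then `R ≤ s`
on `[a,b]`. -/
theorem stmt10 (a b : ℝ) (hab : a < b) (R s : ℝ → ℝ) (KR Ks : NNReal)
    (hR : LipschitzOnWith KR R (Set.Icc a b))
    (hs : LipschitzOnWith Ks s (Set.Icc a b))
    (hend : R b = s b)
    (hae : ∀ᵐ t ∂(volume.restrict (Set.Ioo a b)),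
      s t < R t →
        derivWithin s (Set.Icc a b) t ≤ derivWithin R (Set.Icc a b) t) :
    ∀ t ∈ Set.Icc a b, R t ≤ s t := by
  obtain ⟨Rt, hRt, hReq⟩ := hR.extend_real
  obtain ⟨st, hst, hseq⟩ := hs.extend_real
  set u : ℝ → ℝ := fun t => Rt t - st t with hudef
  have hu : LipschitzWith (KR + Ks) u := hRt.sub hst
  have hub : u b = 0 := by
    simp only [hudef]
    rw [← hReq (right_mem_Icc.2 hab.le), ← hseq (right_mem_Icc.2 hab.le), hend, sub_self]
  -- suppose not
  by_contra hcon
  push_neg at hcon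
  obtain ⟨t₀, ht₀m, ht₀⟩ := hcon
  have hut₀ : 0 < u t₀ := by
    simp only [hudef]
    rw [← hReq ht₀m, ← hseq ht₀m]
    linarith
  have ht₀b : t₀ < b := by
    rcases lt_or_eq_of_le ht₀m.2 with h | h
    · exact h
    · exfalso; rw [h] at hut₀; rw [hub] at hut₀; exact lt_irrefl 0 hut₀
  -- first zero of u after t₀
  set Z : Set ℝ := {t ∈ Icc t₀ b | u t ≤ 0} with hZdef
  have hZne : Z.Nonempty := ⟨b, ⟨⟨ht₀b.le, le_refl b⟩, hub.le⟩⟩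
  have hZbdd : BddBelow Z := ⟨t₀, fun t ht => ht.1.1⟩
  have hZclosed : IsClosed Z := by
    apply IsClosed.inter isClosed_Icc
    exact isClosed_le hu.continuous continuous_const
  set c := sInf Z with hcdef
  have hcZ : c ∈ Z := hZclosed.csInf_mem hZne hZbdd
  have hcIcc : c ∈ Icc t₀ b := hcZ.1
  have huc : u c ≤ 0 := hcZ.2
  have ht₀c : t₀ < c := by
    rcases lt_or_eq_of_le hcIcc.1 with h | h
    · exact h
    · exfalso; rw [h] at hut₀; linarith
  have hpos : ∀ t, t₀ ≤ t → t < c → 0 < u t := by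
    intro t ht1 ht2
    by_contra h
    push_neg at h
    have : t ∈ Z := ⟨⟨ht1, ht2.le.trans hcIcc.2⟩, h⟩
    exact absurd (csInf_le hZbdd this) (not_le.2 ht2)
  -- FTC
  have hftc := lipschitz_ftc hu ht₀c.le
  -- the derivative of u is nonneg a.e. on Ioc t₀ c
  have hsub : Ioc t₀ c ⊆ Icc a b := fun t ht =>
    ⟨ht₀m.1.trans ht.1.le, ht.2.trans hcIcc.2⟩
  have hkey : ∀ᵐ t ∂(volume.restrict (Ioc t₀ c)), 0 ≤ deriv u t := by
    have hae0 : ∀ᵐ t ∂(volume : Measure ℝ), t ∈ Ioo a b →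
        (s t < R t → derivWithin s (Set.Icc a b) t ≤ derivWithin R (Set.Icc a b) t) :=
      (ae_restrict_iff' measurableSet_Ioo).1 hae
    have hneb : ∀ᵐ t ∂(volume : Measure ℝ), t ≠ b := by
      rw [ae_iff]
      have : {t : ℝ | ¬ t ≠ b} = {b} := by ext t; simp
      rw [this]
      exact measure_singleton b
    have hnec : ∀ᵐ t ∂(volume : Measure ℝ), t ≠ c := by
      rw [ae_iff]
      have : {t : ℝ | ¬ t ≠ c} = {c} := by ext t; simp
      rw [this]
      exact measure_singleton c
    have hdR : ∀ᵐ t ∂(volume : Measure ℝ), DifferentiableAt ℝ Rt t := hRt.ae_differentiableAt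
    have hds : ∀ᵐ t ∂(volume : Measure ℝ), DifferentiableAt ℝ st t := hst.ae_differentiableAt
    filter_upwards [ae_restrict_of_ae hae0, ae_restrict_of_ae hneb, ae_restrict_of_ae hnec,
      ae_restrict_of_ae hdR, ae_restrict_of_ae hds, ae_restrict_mem measurableSet_Ioc]
      with t h1 h2 h3 h4 h5 h6
    have htIoo : t ∈ Ioo a b := by
      refine ⟨lt_of_le_of_lt ht₀m.1 h6.1, ?_⟩
      exact lt_of_le_of_ne (h6.2.trans hcIcc.2) h2
    have htc : t < c := lt_of_le_of_ne h6.2 h3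
    have htIcc : t ∈ Icc a b := ⟨htIoo.1.le, htIoo.2.le⟩
    have hut : 0 < u t := hpos t h6.1.le htc
    have hlt : s t < R t := by
      have := hut
      simp only [hudef] at this
      rw [← hReq htIcc, ← hseq htIcc] at this
      linarith
    have hder := h1 htIoo hlt
    -- convert derivWithin to deriv of extensions
    have hnhds : Icc a b ∈ nhds t := mem_nhds_iff.2 ⟨Ioo a b, Ioo_subset_Icc_self, isOpen_Ioo, htIoo⟩
    have heqR : R =ᶠ[nhds t] Rt :=
      Filter.eventuallyEq_of_mem hnhds hReq
    have heqs : s =ᶠ[nhds t] st :=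
      Filter.eventuallyEq_of_mem hnhds hseq
    have eR : derivWithin R (Set.Icc a b) t = deriv Rt t := by
      rw [derivWithin_of_mem_nhds hnhds, heqR.deriv_eq]
    have es : derivWithin s (Set.Icc a b) t = deriv st t := by
      rw [derivWithin_of_mem_nhds hnhds, heqs.deriv_eq]
    rw [eR, es] at hder
    have : deriv u t = deriv Rt t - deriv st t := (h4.hasDerivAt.sub h5.hasDerivAt).deriv
    rw [this]
    linarith
  have hint_nonneg : 0 ≤ ∫ t in Ioc t₀ c, deriv u t := integral_nonneg_of_ae hkey
  have : 0 < u c := by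
    have : u c - u t₀ ≥ 0 := by rw [hftc]; exact hint_nonneg
    linarith
  linarith
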